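/- Let K be a field of characteristic 0 and let t ∈ K satisfy t² = 2t + 4. Then the Weierstrass curves C_{25,1}(t,1), C_{25,2}(t,1), C_{25,3}(t,1) all have nonzero discriminant, the j-invariant of C_{25,2}(t,1) equals 1728, and the j-invariants of C_{25,1}(t,1) and C_{25,3}(t,1) are both equal to 9845745509376·t + 12170004103872. -/
import Mathlib


noncomputable section

/-- The polynomial `S2`. -/
def S2 {K : Type*} [Field K] (t : K) : K := t ^ 2 + 4

/-- The polynomial `S4`. -/
def S4 {K : Type*} [Field K] (t : K) : K := t ^ 10 + 240 * t ^ 9 + 2170 * t ^ 8 + 8880 * t ^ 7 + 34835 * t ^ 6 + 83748 * t ^ 5 + 206210 * t ^ 4 + 313380 * t ^ 3 + 503545 * t ^ 2 + 424740 * t + 375376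

/-- The polynomial `S5`. -/
def S5 {K : Type*} [Field K] (t : K) : K := t ^ 4 + 6 * t ^ 3 + 21 * t ^ 2 + 36 * t + 61

/-- The polynomial `S6`. -/
def S6 {K : Type*} [Field K] (t : K) : K := t ^ 10 - 510 * t ^ 9 - 13580 * t ^ 8 - 36870 * t ^ 7 - 190915 * t ^ 6 - 393252 * t ^ 5 - 1068040 * t ^ 4 - 1508370 * t ^ 3 - 2581955 * t ^ 2 - 2087010 * t - 1885124

/-- The polynomial `S7`. -/
def S7 {K : Type*} [Field K] (t : K) : K := t ^ 10 + 10 * t ^ 8 + 35 * t ^ 6 - 12 * t ^ 5 + 50 * t ^ 4 - 60 * t ^ 3 + 25 * t ^ 2 - 60 * t + 16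

/-- The polynomial `S8`. -/
def S8 {K : Type*} [Field K] (t : K) : K := t ^ 4 + 3 * t ^ 2 + 1

/-- The polynomial `S9`. -/
def S9 {K : Type*} [Field K] (t : K) : K := t ^ 10 + 10 * t ^ 8 + 35 * t ^ 6 - 18 * t ^ 5 + 50 * t ^ 4 - 90 * t ^ 3 + 25 * t ^ 2 - 90 * t + 76

/-- The polynomial `S10`. -/
def S10 {K : Type*} [Field K] (t : K) : K := t ^ 2 + 3 * t + 1

/-- The polynomial `S11`. -/
def S11 {K : Type*} [Field K] (t : K) : K := t ^ 4 - 4 * t ^ 3 + 11 * t ^ 2 - 14 * t + 31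

/-- The polynomial `S12`. -/
def S12 {K : Type*} [Field K] (t : K) : K := t ^ 4 + t ^ 3 + 11 * t ^ 2 - 4 * t + 16

/-- The polynomial `S13`. -/
def S13 {K : Type*} [Field K] (t : K) : K := t ^ 2 - 2 * t - 4

/-- The polynomial `S14`. -/
def S14 {K : Type*} [Field K] (t : K) : K := t ^ 4 - 4 * t ^ 3 + 21 * t ^ 2 - 34 * t + 41

/-- The curve `C_{25,1}(t,d)`. -/
def C251 {K : Type*} [Field K] (t d : K) : WeierstrassCurve K :=
  { a₁ := 0, a₂ := 0, a₃ := 0,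
    a₄ := -27 * d ^ 2 * S2 t * S4 t,
    a₆ := -54 * d ^ 3 * S2 t ^ 2 * S5 t * S6 t }

/-- The curve `C_{25,2}(t,d)`. -/
def C252 {K : Type*} [Field K] (t d : K) : WeierstrassCurve K :=
  { a₁ := 0, a₂ := 0, a₃ := 0,
    a₄ := -16875 * d ^ 2 * S2 t * S10 t * S11 t * S12 t,
    a₆ := -843750 * d ^ 3 * S2 t ^ 2 * S5 t * S8 t * S13 t * S14 t }

/-- The curve `C_{25,3}(t,d)`. -/
def C253 {K : Type*} [Field K] (t d : K) : WeierstrassCurve K :=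
  { a₁ := 0, a₂ := 0, a₃ := 0,
    a₄ := -10546875 * d ^ 2 * S2 t * S7 t,
    a₆ := -13183593750 * d ^ 3 * S2 t ^ 2 * S8 t * S9 t }

theorem stmt12 {K : Type*} [Field K] [CharZero K] (t : K) (ht : t ^ 2 = 2 * t + 4) :
    (C251 t 1).Δ ≠ 0 ∧ (C252 t 1).Δ ≠ 0 ∧ (C253 t 1).Δ ≠ 0 ∧
    (C252 t 1).c₄ ^ 3 / (C252 t 1).Δ = 1728 ∧
    (C251 t 1).c₄ ^ 3 / (C251 t 1).Δ = 9845745509376 * t + 12170004103872 ∧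
    (C253 t 1).c₄ ^ 3 / (C253 t 1).Δ = 9845745509376 * t + 12170004103872 := by
  have hD1 : (C251 t 1).Δ = (233834040000000000000000 : K) + (191318760000000000000000 : K) * t := by
    simp only [C251, S2, S4, S5, S6, WeierstrassCurve.Δ, WeierstrassCurve.b₂,
      WeierstrassCurve.b₄, WeierstrassCurve.b₆, WeierstrassCurve.b₈]
    linear_combination ((2176782336 : K) * t ^ 33 + (-47889211392 : K) * t ^ 32 + (550725931008 : K) * t ^ 31 + (-4384039624704 : K) * t ^ 30 + (27024752701440 : K) * t ^ 29 + (-136834714423296 : K) * t ^ 28 + (589890598797312 : K) * t ^ 27 + (-2217592651235328 : K) * t ^ 26 + (7395115149840384 : K) * t ^ 25 + (-22156814363443200 : K) * t ^ 24 + (60243354513469440 : K) * t ^ 23 + (-149848890600775680 : K) * t ^ 22 + (343302943465451520 : K) * t ^ 21 + (-728586755983503360 : K) * t ^ 20 + (1439730693894758400 : K) * t ^ 19 + (-2660870037535211520 : K) * t ^ 18 + (4619199412217917440 : K) * t ^ 17 + (-7560816414267432960 : K) * t ^ 16 + (11720962319044423680 : K) * t ^ 15 + (-17272425319459430400 : K)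 * t ^ 14 + (24362573078999715840 : K) * t ^ 13 + (-32963481953582100480 : K) * t ^ 12 + (43492109375389777920 : K) * t ^ 11 + (-55099757298177884160 : K) * t ^ 10 + (71569345816172851200 : K) * t ^ 9 + (-82516954677208252416 : K) * t ^ 8 + (124342084533686833152 : K) * t ^ 7 + (-82962989920474472448 : K) * t ^ 6 + (332129108342493057024 : K) * t ^ 5 + (332155609200282562560 : K) * t ^ 4 + (1992902859382567919616 : K) * t ^ 3 + (5314410115082128539648 : K) * t ^ 2 + (18600434990439571980288 : K) * t + (58458510000383113691136 : K)) * ht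
  have hne1 : (C251 t 1).Δ ≠ 0 := by
    rw [hD1]
    intro h
    have hN : (-2259436291848000000000000000000000000000000000 : K) = 0 := by
      linear_combination ((233834040000000000000000 : K) + 2 * (191318760000000000000000 : K) - (191318760000000000000000 : K) * t) * h + ((191318760000000000000000 : K) ^ 2) * ht
    norm_num at hN
  have hj1 : (C251 t 1).c₄ ^ 3 / (C251 t 1).Δ = 9845745509376 * t + 12170004103872 := by
    rw [div_eq_iff hne1, hD1]
    simp only [C251, S2, S4, S5, S6, WeierstrassCurve.c₄, WeierstrassCurve.b₂, WeierstrassCurve.b₄]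
    linear_combination ((2176782336 : K) * t ^ 34 + (1571636846592 : K) * t ^ 33 + (393496942878720 : K) * t ^ 32 + (37763925770354688 : K) * t ^ 31 + (956840089860624384 : K) * t ^ 30 + (13590021423478431744 : K) * t ^ 29 + (139040882968193261568 : K) * t ^ 28 + (1139362705617772216320 : K) * t ^ 27 + (7877040224049981038592 : K) * t ^ 26 + (47604426438123620499456 : K) * t ^ 25 + (257362758908962722570240 : K) * t ^ 24 + (1266396573980973662945280 : K) * t ^ 23 + (5751913661980668390297600 : K) * t ^ 22 + (24380708605653656281374720 : K) * t ^ 21 + (97448237779568161144872960 : K) * t ^ 20 + (370444981833944285402234880 : K) * t ^ 19 + (1351028049295290268907151360 : K) * t ^ 18 + (4762558826290738124439552000 : K) * t ^ 17 + (16348718213431231349706301440 : K) * t ^ 16 + (54996047480504568206823505920 : K) * t ^ 15 + (182344287960674868997033021440 : K) * t ^ 14 + (598585267787339298901445959680 : K) * t ^ 13 + (1952585962151658377146522214400 : K) * t ^ 12 + (6344940194850609825852324741120 : K) * t ^ 11 + (20574241464915284922935822684160 : K) * t ^ 10 + (66640188954438631036064320118784 : K) * t ^ 9 + (215734729995251368867095667458048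 : K) * t ^ 8 + (698233999450066874082998965370880 : K) * t ^ 7 + (2259650213289659841462137218793472 : K) * t ^ 6 + (7312500281331462030566785334378496 : K) * t ^ 5 + (23663861699206605109501703586840576 : K) * t ^ 4 + (76577951958656094844297295046377472 : K) * t ^ 3 + (247811527218016471926753692567470080 : K) * t ^ 2 + (801934977268866249398069678957395968 : K) * t + (711440304764052039893807788273434624 : K)) * ht

  have hD2 : (C252 t 1).Δ = (18532966904296875000000000000000000 : K) + (14993486806640625000000000000000000 : K) * t := by
    simp only [C252, S2, S5, S8, S10, S11, S12, S13, S14, WeierstrassCurve.Δ, WeierstrassCurve.b₂,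
      WeierstrassCurve.b₄, WeierstrassCurve.b₆, WeierstrassCurve.b₈]
    linear_combination ((531441000000000000 : K) * t ^ 29 + (1062882000000000000 : K) * t ^ 28 + (23914845000000000000 : K) * t ^ 27 + (52081218000000000000 : K) * t ^ 26 + (530909559000000000000 : K) * t ^ 25 + (1240914735000000000000 : K) * t ^ 24 + (7960986180000000000000 : K) * t ^ 23 + (19950295140000000000000 : K) * t ^ 22 + (94556639925000000000000 : K) * t ^ 21 + (255527461620000000000000 : K) * t ^ 20 + (999653807025000000000000 : K) * t ^ 19 + (2908475619210000000000000 : K) * t ^ 18 + (10216695476115000000000000 : K) * t ^ 17 + (31444271858745000000000000 : K) * t ^ 16 + (104946832287180000000000000 : K) * t ^ 15 + (333308385161730000000000000 : K) * t ^ 14 + (1089644595513345000000000000 : K) * t ^ 13 + (3506151514044240000000000000 : K) * t ^ 12 + (11379243328698285000000000000 : K) * t ^ 11 + (36770225235561900000000000000 : K) * t ^ 10 + (119075834592139320000000000000 : K) * t ^ 9 + (385211057014865925000000000000 : K) * t ^ 8 + (1246755882834837765000000000000 : K) * t ^ 7 + (4034323485244020780000000000000 : K) * t ^ 6 + (13055706568158545385000000000000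 : K) * t ^ 5 + (42248666495155851999000000000000 : K) * t ^ 4 + (136720192821648764958000000000000 : K) * t ^ 3 + (442435018304370760020000000000000 : K) * t ^ 2 + (1431750834826002966672000000000000 : K) * t + (4633241727443644421856000000000000 : K)) * ht
  have hne2 : (C252 t 1).Δ ≠ 0 := by
    rw [hD2]
    intro h
    have hN : (-134672897568225860595703125000000000000000000000000000000000000 : K) = 0 := by
      linear_combination ((18532966904296875000000000000000000 : K) + 2 * (14993486806640625000000000000000000 : K) - (14993486806640625000000000000000000 : K) * t) * h + ((14993486806640625000000000000000000 : K) ^ 2) * ht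
    norm_num at hN
  have hj2 : (C252 t 1).c₄ ^ 3 / (C252 t 1).Δ = 1728 := by
    rw [div_eq_iff hne2, hD2]
    simp only [C252, S2, S5, S8, S10, S11, S12, S13, S14, WeierstrassCurve.c₄, WeierstrassCurve.b₂, WeierstrassCurve.b₄]
    linear_combination ((531441000000000000 : K) * t ^ 34 + (1062882000000000000 : K) * t ^ 33 + (26572050000000000000 : K) * t ^ 32 + (57395628000000000000 : K) * t ^ 31 + (653140989000000000000 : K) * t ^ 30 + (1899370134000000000000 : K) * t ^ 29 + (11520577998000000000000 : K) * t ^ 28 + (44088345360000000000000 : K) * t ^ 27 + (175504138722000000000000 : K) * t ^ 26 + (753825675096000000000000 : K) * t ^ 25 + (2533905373590000000000000 : K) * t ^ 24 + (10378288083780000000000000 : K) * t ^ 23 + (34616113694325000000000000 : K) * t ^ 22 + (126348859492470000000000000 : K) * t ^ 21 + (432937565658810000000000000 : K) * t ^ 20 + (1452984820530480000000000000 : K) * t ^ 19 + (4969740012101010000000000000 : K) * t ^ 18 + (16193720251245600000000000000 : K) * t ^ 17 + (54066643572654090000000000000 : K) * t ^ 16 + (175700985648199020000000000000 : K) * t ^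 15 + (574476747787631565000000000000 : K) * t ^ 14 + (1867277622435964830000000000000 : K) * t ^ 13 + (6051194379390031650000000000000 : K) * t ^ 12 + (19633381622383142520000000000000 : K) * t ^ 11 + (63512709579872071785000000000000 : K) * t ^ 10 + (205725442808611924254000000000000 : K) * t ^ 9 + (665584867025999164908000000000000 : K) * t ^ 8 + (2154365960769455076000000000000000 : K) * t ^ 7 + (6971227037969683590432000000000000 : K) * t ^ 6 + (22560250092585915465216000000000000 : K) * t ^ 5 + (73005629311498891513536000000000000 : K) * t ^ 4 + (236252491400610959294592000000000000 : K) * t ^ 3 + (764527686773765634800640000000000000 : K) * t ^ 2 + (2474065442505156819429888000000000000 : K) * t + (8006241701618673638851584000000000000 : K)) * ht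

  have hD3 : (C253 t 1).Δ = (57088388671875000000000000000000 : K) + (46708681640625000000000000000000 : K) * t := by
    simp only [C253, S2, S7, S8, S9, WeierstrassCurve.Δ, WeierstrassCurve.b₂,
      WeierstrassCurve.b₄, WeierstrassCurve.b₆, WeierstrassCurve.b₈]
    linear_combination ((129746337890625000000000000 : K) * t ^ 9 + (259492675781250000000000000 : K) * t ^ 8 + (3243658447265625000000000000 : K) * t ^ 7 + (7525287597656250000000000000 : K) * t ^ 6 + (42686545166015625000000000000 : K) * t ^ 5 + (114047031005859375000000000000 : K) * t ^ 4 + (446067909667968750000000000000 : K) * t ^ 3 + (1331197426757812500000000000000 : K) * t ^ 2 + (4519324441406250000000000000000 : K) * t + (14294932523437500000000000000000 : K)) * ht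
  have hne3 : (C253 t 1).Δ ≠ 0 := by
    rw [hD3]
    intro h
    have hN : (-134672897568225860595703125000000000000000000000000000000000000 : K) = 0 := by
      linear_combination ((57088388671875000000000000000000 : K) + 2 * (46708681640625000000000000000000 : K) - (46708681640625000000000000000000 : K) * t) * h + ((46708681640625000000000000000000 : K) ^ 2) * ht
    norm_num at hN
  have hj3 : (C253 t 1).c₄ ^ 3 / (C253 t 1).Δ = 9845745509376 * t + 12170004103872 := by
    rw [div_eq_iff hne3, hD3]
    simp only [C253, S2, S7, S8, S9, WeierstrassCurve.c₄, WeierstrassCurve.b₂, WeierstrassCurve.b₄]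
    linear_combination ((129746337890625000000000000 : K) * t ^ 34 + (259492675781250000000000000 : K) * t ^ 33 + (6487316894531250000000000000 : K) * t ^ 32 + (14012604492187500000000000000 : K) * t ^ 31 + (159458249267578125000000000000 : K) * t ^ 30 + (370296048339843750000000000000 : K) * t ^ 29 + (2625806386230468750000000000000 : K) * t ^ 28 + (6559974843750000000000000000000 : K) * t ^ 27 + (33692788516113281250000000000000 : K) * t ^ 26 + (90715525541015625000000000000000 : K) * t ^ 25 + (374996758161621093750000000000000 : K) * t ^ 24 + (1083363756899414062500000000000000 : K) * t ^ 23 + (3924194207794189453125000000000000 : K) * t ^ 22 + (11981346427243652343750000000000000 : K) * t ^ 21 + (40531376753459472656250000000000000 : K) * t ^ 20 + (128023348042265625000000000000000000 : K) * t ^ 19 + (420541497082199707031250000000000000 : K) * t ^ 18 + (1349793346585253906250000000000000000 : K) * t ^ 17 + (4387185478545314941406250000000000000 : K) * t ^ 16 + (14164750546647846679687500000000000000 : K) * t ^ 15 + (45889260314610596923828125000000000000 : K) * t ^ 14 + (148420331708889089355468750000000000000 : K) * t ^ 13 + (480417487387098156738281250000000000000 : K) * t ^ 12 + (1554490469256599619140625000000000000000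 : K) * t ^ 11 + (5030680545176549205322265625000000000000 : K) * t ^ 10 + (16279292047722257737792968750000000000000 : K) * t ^ 9 + (52681340551892119479492187500000000000000 : K) * t ^ 8 + (170479818944063228320312500000000000000000 : K) * t ^ 7 + (551685028786191241101562500000000000000000 : K) * t ^ 6 + (1785289309793783546625000000000000000000000 : K) * t ^ 5 + (5777318751617948114671875000000000000000000 : K) * t ^ 4 + (18695794729831523010281250000000000000000000 : K) * t ^ 3 + (60500864473016733708750000000000000000000000 : K) * t ^ 2 + (195784907861700588173625000000000000000000000 : K) * t + (173691481105031133350250000000000000000000000 : K)) * ht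
  exact ⟨hne1, hne2, hne3, hj2, hj1, hj3⟩
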